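/- Let A ∈ M_n(ℝ) be nonsingular. Then A is a full matrix with the inverse cyclic property if and only if A^{-1} is a bdsw matrix. -/

import Mathlib

open Matrix Finset

/-- A matrix (of order ≥ 2) has the *inverse cyclic property* if all its diagonal
entries are nonzero and the three cyclic entry conditions hold. -/
def InvCyclic {n : ℕ} (A : Matrix (Fin (n + 2)) (Fin (n + 2)) ℝ) : Prop :=
  (∀ i, A i i ≠ 0) ∧
  (∀ i k j : Fin (n + 2), i < k → k < j → A i j = A i k * A k j / A k k) ∧
  (∀ i j : Fin (n + 2), j < i → i ≠ Fin.last (n + 1) →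
    A i j = A i (Fin.last (n + 1)) * A (Fin.last (n + 1)) j /
      A (Fin.last (n + 1)) (Fin.last (n + 1))) ∧
  (∀ j : Fin (n + 2), j < Fin.last (n + 1) →
    A (Fin.last (n + 1)) j = A (Fin.last (n + 1)) 0 * A 0 j / A 0 0)

/-- `d`, the product of the diagonal entries. -/
def diagProd {n : ℕ} (A : Matrix (Fin (n + 2)) (Fin (n + 2)) ℝ) : ℝ := ∏ i, A i i

/-- `c`, the cyclic product `a₁₂a₂₃⋯a_{(n-1)n}a_{n1}`. -/
def cycProd {n : ℕ} (A : Matrix (Fin (n + 2)) (Fin (n + 2)) ℝ) : ℝ :=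
  ∏ i : Fin (n + 2), A i (i + 1)
/-- A *bi-diagonal south-west* (bdsw) matrix: the diagonal, the super diagonal and the
south-west corner entry are nonzero, and all other entries are zero. -/
def Bdsw {n : ℕ} (B : Matrix (Fin (n + 2)) (Fin (n + 2)) ℝ) : Prop :=
  (∀ i, B i i ≠ 0) ∧
  (∀ i j : Fin (n + 2), (j : ℕ) = (i : ℕ) + 1 → B i j ≠ 0) ∧
  (B (Fin.last (n + 1)) 0 ≠ 0) ∧
  (∀ i j : Fin (n + 2), i ≠ j → (j : ℕ) ≠ (i : ℕ) + 1 →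
    ¬(i = Fin.last (n + 1) ∧ j = 0) → B i j = 0)

namespace Stmt7Aux
open Fin.NatCast
variable {n : ℕ}

lemma sub_val (i j : Fin (n+2)) :
    (j - i).val = if i.val ≤ j.val then j.val - i.val else n + 2 + j.val - i.val := by
  rcases i with ⟨iv, hi⟩; rcases j with ⟨jv, hj⟩
  rw [Fin.sub_def]
  simp only []
  split_ifs with h
  · have he : n + 2 - iv + jv = (jv - iv) + (n+2) := by omega
    rw [he, Nat.add_mod_right, Nat.mod_eq_of_lt (by omega)]
  · rw [Nat.mod_eq_of_lt (by omega)]; omega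

lemma val_sub_one (a : Fin (n+2)) (h : a ≠ 0) : (a - 1).val = a.val - 1 := by
  have h0 : a.val ≠ 0 := fun hc => h (Fin.ext hc)
  rw [sub_val]
  simp [Fin.val_one]
  omega

/-- cyclic product of `w` over the cyclic interval `[i, j)`. -/
def cp (w : Fin (n+2) → ℝ) (i j : Fin (n+2)) : ℝ :=
  ∏ t ∈ Finset.range (j - i).val, w (i + (t : Fin (n+2)))

lemma cp_self (w : Fin (n+2) → ℝ) (i : Fin (n+2)) : cp w i i = 1 := by
  simp [cp, sub_self]

lemma cp_split (w : Fin (n+2) → ℝ) (i k j : Fin (n+2))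
    (h : (k - i).val + (j - k).val = (j - i).val) :
    cp w i j = cp w i k * cp w k j := by
  rw [cp, ← h, Finset.prod_range_add]
  congr 1
  apply Finset.prod_congr rfl
  intro t _
  congr 1
  rw [Nat.cast_add, Fin.cast_val_eq_self, ← add_assoc, add_comm i (k - i), sub_add_cancel]

lemma cp_one (w : Fin (n+2) → ℝ) (i : Fin (n+2)) : cp w i (i+1) = w i := by
  have h1 : i + 1 - i = 1 := add_sub_cancel_left i 1
  rw [cp, h1, Fin.val_one, Finset.prod_range_one, Nat.cast_zero, add_zero]

lemma cp_succ (w : Fin (n+2) → ℝ) {i j : Fin (n+2)} (h : j ≠ i) :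
    cp w i j = w i * cp w (i+1) j := by
  have hne : j - i ≠ 0 := sub_ne_zero.mpr h
  have hv : (j - i).val ≠ 0 := fun hc => hne (Fin.ext hc)
  have hcond : (i + 1 - i).val + (j - (i+1)).val = (j - i).val := by
    have h1 : i + 1 - i = 1 := add_sub_cancel_left i 1
    have h2 : j - (i + 1) = j - i - 1 := by rw [sub_add_eq_sub_sub]
    rw [h1, h2, Fin.val_one, val_sub_one _ hne]
    omega
  rw [cp_split w i (i+1) j hcond, cp_one]

lemma prod_shift (w : Fin (n+2) → ℝ) (a : Fin (n+2)) :
    ∏ t ∈ Finset.range (n+2), w (a + (t : Fin (n+2))) = ∏ m, w m := by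
  rw [← Fin.prod_univ_eq_prod_range (fun t => w (a + (t : Fin (n+2)))) (n+2)]
  simp only [Fin.cast_val_eq_self]
  exact Fintype.prod_equiv (Equiv.addLeft a) _ _ (fun t => rfl)

lemma cp_wrap (w : Fin (n+2) → ℝ) (i : Fin (n+2)) :
    w i * cp w (i+1) i = ∏ m, w m := by
  have hval : (i - (i+1)).val = n + 1 := by
    rw [sub_val]
    by_cases hl : i = Fin.last (n+1)
    · subst hl
      rw [Fin.last_add_one]
      simp [Fin.val_last]
    · have hne : i.val ≠ n + 1 := fun hc => hl (Fin.ext (by simpa [Fin.val_last] using hc))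
      have hlt : i < Fin.last (n+1) := by
        rw [Fin.lt_def, Fin.val_last]
        have := i.isLt; omega
      have hv1 : (i+1).val = i.val + 1 := Fin.val_add_one_of_lt hlt
      rw [hv1, if_neg (by omega)]
      have := i.isLt; omega
  have he : i + 1 + ((n+1 : ℕ) : Fin (n+2)) = i := by
    have hcast : ((n+1:ℕ) : Fin (n+2)) = Fin.last (n+1) := Fin.natCast_eq_last (n+1)
    rw [add_assoc, hcast, add_comm (1 : Fin (n+2)), Fin.last_add_one, add_zero]
  have h2 : ∏ m, w m = (∏ t ∈ Finset.range (n+1), w (i+1+(t : Fin (n+2)))) * w i := by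
    rw [← prod_shift w (i+1), Finset.prod_range_succ, he]
  rw [cp, hval, h2, mul_comm]

lemma cp_ne_zero (w : Fin (n+2) → ℝ) (hw : ∀ m, w m ≠ 0) (i j : Fin (n+2)) :
    cp w i j ≠ 0 :=
  Finset.prod_ne_zero_iff.mpr (fun m _ => hw _)

end Stmt7Aux

namespace Stmt7Fwd
open Stmt7Aux Matrix

variable {n : ℕ}

-- step 1 : the structural formula A i j = A i i * cp w i j
lemma struct (A : Matrix (Fin (n + 2)) (Fin (n + 2)) ℝ)
    (hfull : ∀ i j, A i j ≠ 0) (hic : InvCyclic A) :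
    ∀ i j, A i j = A i i * cp (fun m => A m (m+1) / A m m) i j := by
  set w : Fin (n+2) → ℝ := fun m => A m (m+1) / A m m with hw
  have hw1 : ∀ i, A i (i+1) = A i i * w i := by
    intro i
    show A i (i+1) = A i i * (A i (i+1) / A i i)
    field_simp [hfull i i]
  have hupper : ∀ m : ℕ, ∀ i j : Fin (n+2), j.val - i.val = m → i.val < j.val →
      A i j = A i i * cp w i j := by
    intro m
    induction m using Nat.strong_induction_on with
    | _ m ih =>
      intro i j hm hij
      have hjne : j ≠ i := fun h => by rw [h] at hij; omega
      have hilast : i < Fin.last (n+1) := by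
        rw [Fin.lt_def, Fin.val_last]; have := j.isLt; omega
      have hi1 : (i+1).val = i.val + 1 := Fin.val_add_one_of_lt hilast
      rcases eq_or_lt_of_le (show i.val + 1 ≤ j.val from hij) with h1 | h1
      · -- j = i + 1
        have hj : j = i + 1 := Fin.ext (by omega)
        subst hj
        rw [cp_one, hw1]
      · -- i + 1 < j
        have h2 : A i j = A i (i+1) * A (i+1) j / A (i+1) (i+1) :=
          hic.2.1 i (i+1) j (Fin.lt_def.mpr (by omega)) (Fin.lt_def.mpr (by omega))
        have h3 : A (i+1) j = A (i+1) (i+1) * cp w (i+1) j :=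
          ih (m-1) (by omega) (i+1) j (by omega) (by omega)
        rw [h2, h3, hw1 i, cp_succ w hjne]
        field_simp [hfull (i+1) (i+1)]
  have hupperEq : ∀ i j : Fin (n+2), i.val ≤ j.val → A i j = A i i * cp w i j := by
    intro i j hle
    rcases eq_or_lt_of_le hle with h | h
    · have hji : j = i := Fin.ext h.symm
      subst hji
      rw [cp_self, mul_one]
    · exact hupper _ i j rfl h
  have hlastrow : ∀ j : Fin (n+2), j ≠ Fin.last (n+1) →
      A (Fin.last (n+1)) j = A (Fin.last (n+1)) (Fin.last (n+1)) * cp w (Fin.last (n+1)) j := by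
    intro j hj
    have hjlt : j < Fin.last (n+1) := by
      rw [Fin.lt_def, Fin.val_last]
      have := j.isLt
      have : j.val ≠ n + 1 := fun hc => hj (Fin.ext (by simpa [Fin.val_last] using hc))
      omega
    have h0 : A (Fin.last (n+1)) j = A (Fin.last (n+1)) 0 * A 0 j / A 0 0 := hic.2.2.2 j hjlt
    have hA0 : A 0 j = A 0 0 * cp w 0 j := hupperEq 0 j (Nat.zero_le _)
    have hAl0 : A (Fin.last (n+1)) 0 = A (Fin.last (n+1)) (Fin.last (n+1)) * w (Fin.last (n+1)) := by
      rw [← Fin.last_add_one (n+1)]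
      exact hw1 _
    rw [h0, hA0, hAl0, cp_succ w hj, Fin.last_add_one]
    field_simp [hfull 0 0]
  intro i j
  rcases le_or_gt i.val j.val with hle | hlt
  · exact hupperEq i j hle
  · by_cases hi : i = Fin.last (n+1)
    · subst hi
      exact hlastrow j (fun hc => by rw [hc, Fin.val_last] at hlt; omega)
    · have hjlast : j ≠ Fin.last (n+1) := by
        intro hc
        rw [hc, Fin.val_last] at hlt
        have := i.isLt; omega
      have h0 : A i j = A i (Fin.last (n+1)) * A (Fin.last (n+1)) j /
          A (Fin.last (n+1)) (Fin.last (n+1)) := hic.2.2.1 i j (Fin.lt_def.mpr hlt) hi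
      have h1 : A i (Fin.last (n+1)) = A i i * cp w i (Fin.last (n+1)) :=
        hupperEq i _ (by rw [Fin.val_last]; have := i.isLt; omega)
      have h2 := hlastrow j hjlast
      have hsplit : cp w i j = cp w i (Fin.last (n+1)) * cp w (Fin.last (n+1)) j := by
        apply cp_split
        rw [sub_val, sub_val, sub_val, Fin.val_last]
        have hi' : i.val ≠ n + 1 := fun hc => hi (Fin.ext (by simpa [Fin.val_last] using hc))
        have := i.isLt; have := j.isLt
        split_ifs <;> omega
      rw [h0, h1, h2, hsplit]
      field_simp [hfull (Fin.last (n+1)) (Fin.last (n+1))]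


lemma one_ne_zero' : (1 : Fin (n+2)) ≠ 0 := by
  intro h
  have := congrArg Fin.val h
  rw [Fin.val_one, Fin.val_zero] at this
  exact one_ne_zero this

lemma forward (A : Matrix (Fin (n + 2)) (Fin (n + 2)) ℝ) (hdet : A.det ≠ 0)
    (hfull : ∀ i j, A i j ≠ 0) (hic : InvCyclic A) : Bdsw A⁻¹ := by
  set w : Fin (n+2) → ℝ := fun m => A m (m+1) / A m m with hw
  have hFA : ∀ i j, A i j = A i i * cp w i j := struct A hfull hic
  have hwne : ∀ m, w m ≠ 0 := fun m => div_ne_zero (hfull _ _) (hfull _ _)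
  set c : ℝ := ∏ m, w m with hc
  set B0 : Matrix (Fin (n+2)) (Fin (n+2)) ℝ :=
    fun i j => ((if i = j then (1:ℝ) else 0) - (if j = i + 1 then w i else 0)) / A j j with hB0
  have hmul : A * B0 = (1 - c) • (1 : Matrix (Fin (n+2)) (Fin (n+2)) ℝ) := by
    ext i j
    rw [Matrix.mul_apply]
    have hsum : ∀ k : Fin (n+2), A i k * B0 k j =
        (if k = j then A i j / A j j else 0) - (if k = j - 1 then A i (j-1) * w (j-1) / A j j else 0) := by
      intro k
      have hiff : (j = k + 1) ↔ (k = j - 1) := by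
        constructor
        · rintro rfl; rw [add_sub_cancel_right]
        · rintro rfl; rw [sub_add_cancel]
      show A i k * (((if k = j then (1:ℝ) else 0) - (if j = k + 1 then w k else 0)) / A j j) = _
      by_cases h1 : k = j
      · rw [if_pos h1, if_pos h1]
        have h2 : ¬ (j = k + 1) := by
          intro hc2
          rw [← h1] at hc2
          exact one_ne_zero' (left_eq_add.mp hc2)
        have h3 : ¬ (k = j - 1) := fun hc2 => h2 (hiff.mpr hc2)
        rw [if_neg h2, if_neg h3, h1]
        ring
      · rw [if_neg h1, if_neg h1]
        by_cases h2 : k = j - 1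
        · subst h2
          rw [if_pos (hiff.mpr rfl), if_pos rfl]
          ring
        · rw [if_neg (fun hc2 => h2 (hiff.mp hc2)), if_neg h2]
          ring
    rw [Finset.sum_congr rfl (fun k _ => hsum k), Finset.sum_sub_distrib,
        Finset.sum_ite_eq' Finset.univ j, Finset.sum_ite_eq' Finset.univ (j-1),
        if_pos (Finset.mem_univ j), if_pos (Finset.mem_univ (j-1))]
    rw [Matrix.smul_apply, Matrix.one_apply]
    by_cases hij : i = j
    · subst hij
      rw [if_pos rfl, hFA i i, hFA i (i-1), cp_self]
      have hcw : w (i-1) * cp w i (i-1) = c := by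
        have h0 := cp_wrap w (i-1)
        rwa [sub_add_cancel] at h0
      rw [smul_eq_mul, mul_one, div_self (hfull i i), mul_assoc,
        mul_comm (cp w i (i-1)) (w (i-1)), hcw, mul_comm (A i i) c,
        mul_div_assoc, div_self (hfull i i), mul_one, mul_one]
    · rw [if_neg hij, hFA i j, hFA i (j-1)]
      have hsplit : cp w i j = cp w i (j-1) * cp w (j-1) j := by
        apply cp_split
        have hji : j - i ≠ 0 := sub_ne_zero.mpr (fun h => hij h.symm)
        have h1 : j - (j - 1) = 1 := sub_sub_cancel j 1
        have h2 : j - 1 - i = j - i - 1 := sub_right_comm j 1 i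
        rw [h1, h2, Fin.val_one, val_sub_one _ hji]
        have hv : (j - i).val ≠ 0 := fun h => hji (Fin.ext h)
        omega
      have hone : cp w (j-1) j = w (j-1) := by
        have := cp_one w (j-1)
        rwa [sub_add_cancel] at this
      rw [hsplit, hone, smul_eq_mul, mul_zero]
      ring
  -- A is invertible
  have hAinv : A⁻¹ * A = 1 := Matrix.nonsing_inv_mul A (isUnit_iff_ne_zero.mpr hdet)
  have hc1 : c ≠ 1 := by
    intro hcc
    have hz : A * B0 = 0 := by rw [hmul, hcc]; simp
    have hB00 : B0 = 0 := by
      calc B0 = (A⁻¹ * A) * B0 := by rw [hAinv, Matrix.one_mul]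
        _ = A⁻¹ * (A * B0) := by rw [Matrix.mul_assoc]
        _ = 0 := by rw [hz, Matrix.mul_zero]
    have h00 : B0 0 0 = 0 := by rw [hB00]; rfl
    have h01 : B0 0 0 = 1 / A 0 0 := by
      show ((if (0:Fin (n+2)) = 0 then (1:ℝ) else 0) -
        (if (0:Fin (n+2)) = 0 + 1 then w 0 else 0)) / A 0 0 = 1 / A 0 0
      rw [if_pos rfl, if_neg (by rw [zero_add]; exact fun h => one_ne_zero' h.symm), sub_zero]
    rw [h00] at h01
    rcases div_eq_zero_iff.mp h01.symm with h | h
    · exact one_ne_zero h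
    · exact hfull 0 0 h
  have hsub : (1:ℝ) - c ≠ 0 := sub_ne_zero.mpr (fun h => hc1 h.symm)
  have hABinv : A * ((1-c)⁻¹ • B0) = 1 := by
    rw [Matrix.mul_smul, hmul, smul_smul, inv_mul_cancel₀ hsub, one_smul]
  have hinv : A⁻¹ = (1-c)⁻¹ • B0 := Matrix.inv_eq_right_inv hABinv
  have hent : ∀ i j, A⁻¹ i j =
      (1-c)⁻¹ * (((if i = j then (1:ℝ) else 0) - (if j = i + 1 then w i else 0)) / A j j) := by
    intro i j
    rw [hinv]
    rfl
  have he : (1-c)⁻¹ ≠ 0 := inv_ne_zero hsub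
  refine ⟨?_, ?_, ?_, ?_⟩
  · intro i
    rw [hent i i, if_pos rfl, if_neg (fun h => one_ne_zero' (left_eq_add.mp h)), sub_zero]
    exact mul_ne_zero he (div_ne_zero one_ne_zero (hfull i i))
  · intro i j hj
    have hilast : i < Fin.last (n+1) := by
      rw [Fin.lt_def, Fin.val_last]; have := j.isLt; omega
    have hij : j = i + 1 := Fin.ext (by rw [hj, Fin.val_add_one_of_lt hilast])
    have hne : i ≠ j := fun h => by rw [← h] at hj; omega
    rw [hent i j, if_neg hne, if_pos hij, zero_sub]
    exact mul_ne_zero he (div_ne_zero (neg_ne_zero.mpr (hwne i)) (hfull j j))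
  · have hne : Fin.last (n+1) ≠ (0 : Fin (n+2)) := by
      intro h
      have := congrArg Fin.val h
      rw [Fin.val_last, Fin.val_zero] at this
      omega
    rw [hent _ _, if_neg hne, if_pos (Fin.last_add_one (n+1)).symm, zero_sub]
    exact mul_ne_zero he (div_ne_zero (neg_ne_zero.mpr (hwne _)) (hfull 0 0))
  · intro i j hij hsucc hcorner
    have hjne : j ≠ i + 1 := by
      intro h
      by_cases hi : i = Fin.last (n+1)
      · exact hcorner ⟨hi, by rw [h, hi, Fin.last_add_one]⟩
      · have hilast : i < Fin.last (n+1) := by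
          rw [Fin.lt_def, Fin.val_last]
          have h1 := i.isLt
          have h2 : i.val ≠ n + 1 := fun hcv => hi (Fin.ext (by simpa [Fin.val_last] using hcv))
          omega
        exact hsucc (by rw [h, Fin.val_add_one_of_lt hilast])
    rw [hent i j, if_neg hij, if_neg hjne, sub_zero, zero_div, mul_zero]

end Stmt7Fwd

namespace Stmt7Bwd
open Stmt7Aux Stmt7Fwd Matrix

variable {n : ℕ}

lemma arith (e x y b1 b2 : ℝ) (he : e ≠ 0) (hb1 : b1 ≠ 0) (hb2 : b2 ≠ 0) :
    e * (x * y / b2) = (e * (x / b1)) * (e * (y / b2)) / (e * (1 / b1)) := by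
  field_simp

lemma backward (A : Matrix (Fin (n + 2)) (Fin (n + 2)) ℝ) (hdet : A.det ≠ 0)
    (hB : Bdsw A⁻¹) : (∀ i j, A i j ≠ 0) ∧ InvCyclic A := by
  have hu : IsUnit A.det := isUnit_iff_ne_zero.mpr hdet
  have hBA : A⁻¹ * A = 1 := Matrix.nonsing_inv_mul A hu
  have hAB : A * A⁻¹ = 1 := Matrix.mul_nonsing_inv A hu
  set B : Matrix (Fin (n+2)) (Fin (n+2)) ℝ := A⁻¹ with hBdef
  have hBd : ∀ i, B i i ≠ 0 := hB.1
  have hBs : ∀ i : Fin (n+2), B i (i+1) ≠ 0 := by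
    intro i
    by_cases hi : i = Fin.last (n+1)
    · rw [hi, Fin.last_add_one]
      exact hB.2.2.1
    · apply hB.2.1
      have hlt : i < Fin.last (n+1) := by
        rw [Fin.lt_def, Fin.val_last]
        have h1 := i.isLt
        have h2 : i.val ≠ n + 1 := fun hc => hi (Fin.ext (by simpa [Fin.val_last] using hc))
        omega
      exact Fin.val_add_one_of_lt hlt
  set w : Fin (n+2) → ℝ := fun i => -(B i (i+1)) / B i i with hw
  have hwne : ∀ m, w m ≠ 0 := fun m => div_ne_zero (neg_ne_zero.mpr (hBs m)) (hBd m)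
  have hBzero : ∀ i j : Fin (n+2), i ≠ j → j ≠ i + 1 → B i j = 0 := by
    intro i j hij hsucc
    apply hB.2.2.2 i j hij
    · intro hval
      apply hsucc
      by_cases hi : i = Fin.last (n+1)
      · rw [hi, Fin.val_last] at hval
        have := j.isLt; omega
      · have hlt : i < Fin.last (n+1) := by
          rw [Fin.lt_def, Fin.val_last]
          have h1 := i.isLt
          have h2 : i.val ≠ n + 1 := fun hc => hi (Fin.ext (by simpa [Fin.val_last] using hc))
          omega
        exact Fin.ext (by rw [hval, Fin.val_add_one_of_lt hlt])
    · rintro ⟨hi, hj⟩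
      exact hsucc (by rw [hi, hj, Fin.last_add_one])
  have hBsucc : ∀ i, B i (i+1) = -(w i) * B i i := by
    intro i
    show B i (i+1) = -(-(B i (i+1)) / B i i) * B i i
    rw [neg_div, neg_neg, div_mul_eq_mul_div, mul_div_assoc, div_self (hBd i), mul_one]
  set c : ℝ := ∏ m, w m with hc
  set A' : Matrix (Fin (n+2)) (Fin (n+2)) ℝ := fun i j => cp w i j / B j j with hA'def
  have hii1 : ∀ i : Fin (n+2), i ≠ i + 1 := fun i h => one_ne_zero' (left_eq_add.mp h)
  have hmul : B * A' = (1 - c) • (1 : Matrix (Fin (n+2)) (Fin (n+2)) ℝ) := by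
    ext i j
    rw [Matrix.mul_apply]
    have hsum : ∀ k : Fin (n+2), B i k * A' k j =
        (if k = i then B i i * (cp w i j / B j j) else 0) +
        (if k = i + 1 then B i (i+1) * (cp w (i+1) j / B j j) else 0) := by
      intro k
      by_cases h1 : k = i
      · subst h1
        rw [if_pos rfl, if_neg (hii1 _), add_zero]
      · rw [if_neg h1]
        by_cases h2 : k = i + 1
        · subst h2
          rw [if_pos rfl, zero_add]
        · rw [if_neg h2, hBzero i k (fun h => h1 h.symm) h2, zero_mul, add_zero]
    rw [Finset.sum_congr rfl (fun k _ => hsum k), Finset.sum_add_distrib,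
        Finset.sum_ite_eq' Finset.univ i, Finset.sum_ite_eq' Finset.univ (i+1),
        if_pos (Finset.mem_univ i), if_pos (Finset.mem_univ (i+1))]
    rw [Matrix.smul_apply, Matrix.one_apply, hBsucc i, smul_eq_mul]
    by_cases hij : i = j
    · subst hij
      rw [if_pos rfl, cp_self, mul_one]
      have hcw : w i * cp w (i+1) i = c := cp_wrap w i
      have key : ∀ (b x y : ℝ), b ≠ 0 → b * (1/b) + (-x * b) * (y / b) = 1 - x*y := by
        intro b x y hb
        field_simp
        ring
      calc B i i * (1 / B i i) + -(w i) * B i i * (cp w (i+1) i / B i i)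
          = 1 - w i * cp w (i+1) i := key _ _ _ (hBd i)
        _ = 1 - c := by rw [hcw]
    · rw [if_neg hij, mul_zero, cp_succ w (fun h => hij h.symm)]
      ring
  have hA'eq : A' = (1 - c) • A := by
    calc A' = (A * A⁻¹) * A' := by rw [hAB, Matrix.one_mul]
      _ = A * (B * A') := by rw [Matrix.mul_assoc]
      _ = A * ((1-c) • (1 : Matrix (Fin (n+2)) (Fin (n+2)) ℝ)) := by rw [hmul]
      _ = (1 - c) • A := by rw [Matrix.mul_smul, Matrix.mul_one]
  have hc1 : c ≠ 1 := by
    intro hcc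
    have hz : A' = 0 := by rw [hA'eq, hcc, sub_self, zero_smul]
    have h00 : A' 0 0 = 0 := by rw [hz]; rfl
    have h01 : A' 0 0 = 1 / B 0 0 := by
      show cp w 0 0 / B 0 0 = 1 / B 0 0
      rw [cp_self]
    rw [h00] at h01
    rcases div_eq_zero_iff.mp h01.symm with h | h
    · exact one_ne_zero h
    · exact hBd 0 h
  have hsub : (1:ℝ) - c ≠ 0 := sub_ne_zero.mpr (fun h => hc1 h.symm)
  have hA : ∀ i j, A i j = (1-c)⁻¹ * (cp w i j / B j j) := by
    intro i j
    have h1 : A' i j = ((1 - c) • A) i j := by rw [hA'eq]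
    have h2 : cp w i j / B j j = (1-c) * A i j := h1
    rw [h2, ← mul_assoc, inv_mul_cancel₀ hsub, one_mul]
  have hfull : ∀ i j, A i j ≠ 0 := by
    intro i j
    rw [hA i j]
    exact mul_ne_zero (inv_ne_zero hsub) (div_ne_zero (cp_ne_zero w hwne i j) (hBd j))
  refine ⟨hfull, fun i => hfull i i, ?_, ?_, ?_⟩
  · -- upper condition
    intro i k j hik hkj
    rw [Fin.lt_def] at hik hkj
    have hsplit : cp w i j = cp w i k * cp w k j := by
      apply cp_split
      rw [sub_val, sub_val, sub_val]
      split_ifs <;> omega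
    rw [hA i j, hA i k, hA k j, hA k k, cp_self, hsplit]
    exact arith _ _ _ _ _ (inv_ne_zero hsub) (hBd k) (hBd j)
  · -- lower condition, i ≠ last
    intro i j hji hi
    rw [Fin.lt_def] at hji
    have hi' : i.val ≠ n + 1 := fun hc => hi (Fin.ext (by simpa [Fin.val_last] using hc))
    have hsplit : cp w i j = cp w i (Fin.last (n+1)) * cp w (Fin.last (n+1)) j := by
      apply cp_split
      rw [sub_val, sub_val, sub_val, Fin.val_last]
      have := i.isLt; have := j.isLt
      split_ifs <;> omega
    rw [hA i j, hA i (Fin.last (n+1)), hA (Fin.last (n+1)) j,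
        hA (Fin.last (n+1)) (Fin.last (n+1)), cp_self, hsplit]
    exact arith _ _ _ _ _ (inv_ne_zero hsub) (hBd _) (hBd j)
  · -- last row condition
    intro j hj
    rw [Fin.lt_def, Fin.val_last] at hj
    have hsplit : cp w (Fin.last (n+1)) j = cp w (Fin.last (n+1)) 0 * cp w 0 j := by
      apply cp_split
      rw [sub_val, sub_val, sub_val, Fin.val_last, Fin.val_zero]
      split_ifs <;> omega
    rw [hA (Fin.last (n+1)) j, hA (Fin.last (n+1)) 0, hA 0 j, hA 0 0, cp_self, hsplit]
    exact arith _ _ _ _ _ (inv_ne_zero hsub) (hBd 0) (hBd j)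

end Stmt7Bwd


theorem stmt7 {n : ℕ} (A : Matrix (Fin (n + 2)) (Fin (n + 2)) ℝ) (hdet : A.det ≠ 0) :
    ((∀ i j, A i j ≠ 0) ∧ InvCyclic A) ↔ Bdsw A⁻¹ := by
  constructor
  · rintro ⟨h1, h2⟩
    exact Stmt7Fwd.forward A hdet h1 h2
  · intro h
    exact Stmt7Bwd.backward A hdet h
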